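/- Let A' be the adjacency matrix of the line graph of K_{m,m} over Z_2. For any k ∈ {0,1}^{E(K_{m,m})}, wt(A'·k) = m(l_k^x + l_k^y) − 2 l_k^x l_k^y, where l_k^x and l_k^y are the numbers of vertices of odd degree in the subgraph (K_{m,m})_k lying in the two parts X and Y respectively. -/

import Mathlib

open Finset

/-- Hamming weight of a bitstring. -/
def wt {ι : Type*} [Fintype ι] (k : ι → ZMod 2) : ℕ :=
  (univ.filter fun i => k i ≠ 0).card

/-- Hamming weight of the bitwise OR of two bitstrings. -/
def wtOr {ι : Type*} [Fintype ι] (k l : ι → ZMod 2) : ℕ :=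
  (univ.filter fun i => k i ≠ 0 ∨ l i ≠ 0).card

/-- Adjacency matrix (over `ZMod 2`) of the line graph `L(K_{m,m})` (the rook's
graph): the edges of `K_{m,m}` are labelled by pairs `(i,j) ∈ Fin m × Fin m`
(connecting `x_i` to `y_j`), and two distinct edges are adjacent iff they share an
endpoint. -/
def rookAdj (m : ℕ) : Matrix (Fin m × Fin m) (Fin m × Fin m) (ZMod 2) :=
  fun e f => if e ≠ f ∧ (e.1 = f.1 ∨ e.2 = f.2) then 1 else 0

/-- Degree of the vertex `x_i ∈ X` in the subgraph `(K_{m,m})_k`. -/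
def degX (m : ℕ) (k : Fin m × Fin m → ZMod 2) (i : Fin m) : ℕ :=
  (univ.filter fun j => k (i, j) = 1).card

/-- Degree of the vertex `y_j ∈ Y` in the subgraph `(K_{m,m})_k`. -/
def degY (m : ℕ) (k : Fin m × Fin m → ZMod 2) (j : Fin m) : ℕ :=
  (univ.filter fun i => k (i, j) = 1).card

/-- `l_k^x`: number of odd-degree vertices of `(K_{m,m})_k` in part `X`. -/
def lX (m : ℕ) (k : Fin m × Fin m → ZMod 2) : ℕ :=
  (univ.filter fun i => Odd (degX m k i)).card

/-- `l_k^y`: number of odd-degree vertices of `(K_{m,m})_k` in part `Y`. -/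
def lY (m : ℕ) (k : Fin m × Fin m → ZMod 2) : ℕ :=
  (univ.filter fun j => Odd (degY m k j)).card

lemma rowsum (m : ℕ) (k : Fin m × Fin m → ZMod 2) (i : Fin m) :
    ∑ b, k (i, b) = (degX m k i : ZMod 2) := by
  have h : ∀ x : ZMod 2, x = if x = 1 then 1 else 0 := by decide
  rw [degX]
  rw [Finset.sum_congr rfl (fun b _ => h (k (i, b)))]
  simp [Finset.sum_ite_eq, Finset.sum_boole]

lemma colsum (m : ℕ) (k : Fin m × Fin m → ZMod 2) (j : Fin m) :
    ∑ a, k (a, j) = (degY m k j : ZMod 2) := by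
  have h : ∀ x : ZMod 2, x = if x = 1 then 1 else 0 := by decide
  rw [degY]
  rw [Finset.sum_congr rfl (fun a _ => h (k (a, j)))]
  simp [Finset.sum_boole]

lemma entry (m : ℕ) (k : Fin m × Fin m → ZMod 2) (i j : Fin m) :
    (rookAdj m).mulVec k (i, j) = (degX m k i : ZMod 2) + (degY m k j : ZMod 2) := by
  rw [Matrix.mulVec, dotProduct]
  have : ∀ f : Fin m × Fin m, rookAdj m (i,j) f * k f =
      (if f.1 = i ∧ f.2 ≠ j then k f else 0) + (if f.2 = j ∧ f.1 ≠ i then k f else 0) := by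
    intro f
    rw [rookAdj]
    by_cases h1 : f.1 = i <;> by_cases h2 : f.2 = j <;>
      simp [h1, h2, Prod.ext_iff, @eq_comm _ i, @eq_comm _ j] <;> ring
  rw [Finset.sum_congr rfl (fun f _ => this f), Finset.sum_add_distrib]
  have key : ∀ (c : Fin m) (g : Fin m → ZMod 2),
      (∑ b, if b ≠ c then g b else 0) = (∑ b, g b) + g c := by
    intro c g
    have h2 : ∑ b, g b = (∑ b, if b ≠ c then g b else 0) + (∑ b, if b = c then g b else 0) := by
      rw [← Finset.sum_add_distrib]
      exact Finset.sum_congr rfl fun b _ => by by_cases h : b = c <;> simp [h]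
    rw [h2, Finset.sum_ite_eq' univ c g, if_pos (mem_univ c), add_assoc,
      CharTwo.add_self_eq_zero, add_zero]
  have s1 : (∑ f : Fin m × Fin m, if f.1 = i ∧ f.2 ≠ j then k f else 0)
      = (degX m k i : ZMod 2) + k (i, j) := by
    rw [Fintype.sum_prod_type, Finset.sum_eq_single i]
    · simp only [true_and]
      rw [key j (fun b => k (i, b)), rowsum]
    · intro a _ ha; simp [ha]
    · intro h; exact absurd (mem_univ i) h
  have s2 : (∑ f : Fin m × Fin m, if f.2 = j ∧ f.1 ≠ i then k f else 0)
      = (degY m k j : ZMod 2) + k (i, j) := by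
    rw [Fintype.sum_prod_type_right, Finset.sum_eq_single j]
    · simp only [true_and]
      rw [key i (fun a => k (a, j)), colsum]
    · intro b _ hb; simp [hb]
    · intro h; exact absurd (mem_univ j) h
  rw [s1, s2]
  have : (2 : ZMod 2) = 0 := rfl
  ring_nf
  rw [this, mul_zero, add_zero]


/-- For the adjacency matrix `A'` of the line graph of `K_{m,m}` over
`ZMod 2` and any `k ∈ {0,1}^{E(K_{m,m})}`,
`wt(A'·k) = m(l_k^x + l_k^y) - 2 l_k^x l_k^y`, where `l_k^x`, `l_k^y` count the
odd-degree vertices of the subgraph `(K_{m,m})_k` in the parts `X`, `Y`. -/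
theorem stmt15 (m : ℕ) (k : Fin m × Fin m → ZMod 2) :
    wt ((rookAdj m).mulVec k) = m * (lX m k + lY m k) - 2 * (lX m k * lY m k) := by
  classical
  have hiff : ∀ e : Fin m × Fin m, (rookAdj m).mulVec k e ≠ 0 ↔
      ((Odd (degX m k e.1) ∧ ¬ Odd (degY m k e.2)) ∨
       (¬ Odd (degX m k e.1) ∧ Odd (degY m k e.2))) := by
    rintro ⟨i, j⟩
    rw [entry, ← Nat.cast_add, Ne, ZMod.natCast_eq_zero_iff,
      ← even_iff_two_dvd, Nat.even_add]
    simp only [← Nat.not_even_iff_odd]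
    tauto
  have hset : (univ.filter fun e : Fin m × Fin m => (rookAdj m).mulVec k e ≠ 0) =
      ((univ.filter fun i => Odd (degX m k i)) ×ˢ (univ.filter fun j => ¬ Odd (degY m k j))) ∪
      ((univ.filter fun i => ¬ Odd (degX m k i)) ×ˢ (univ.filter fun j => Odd (degY m k j))) := by
    ext ⟨i, j⟩
    simp [hiff ⟨i, j⟩, Finset.mem_product]
  have hdisj : Disjoint
      ((univ.filter fun i => Odd (degX m k i)) ×ˢ (univ.filter fun j => ¬ Odd (degY m k j)))
      ((univ.filter fun i => ¬ Odd (degX m k i)) ×ˢ (univ.filter fun j => Odd (degY m k j))) := by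
    rw [Finset.disjoint_left]
    rintro ⟨i, j⟩ h1 h2
    simp only [Finset.mem_product, Finset.mem_filter, Finset.mem_univ, true_and] at h1 h2
    tauto
  have hcx : (univ.filter fun i => ¬ Odd (degX m k i)).card = m - lX m k := by
    have := Finset.card_filter_add_card_filter_not
      (s := (univ : Finset (Fin m))) (p := fun i => Odd (degX m k i))
    simp only [Finset.card_univ, Fintype.card_fin] at this
    unfold lX; omega
  have hcy : (univ.filter fun j => ¬ Odd (degY m k j)).card = m - lY m k := by
    have := Finset.card_filter_add_card_filter_not
      (s := (univ : Finset (Fin m))) (p := fun j => Odd (degY m k j))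
    simp only [Finset.card_univ, Fintype.card_fin] at this
    unfold lY; omega
  have h1 : lX m k ≤ m := by
    simpa [lX] using Finset.card_filter_le (univ : Finset (Fin m)) fun i => Odd (degX m k i)
  have h2 : lY m k ≤ m := by
    simpa [lY] using Finset.card_filter_le (univ : Finset (Fin m)) fun j => Odd (degY m k j)
  rw [wt, hset, Finset.card_union_of_disjoint hdisj, Finset.card_product, Finset.card_product,
    hcx, hcy]
  show lX m k * (m - lY m k) + (m - lX m k) * lY m k = _
  have h5 : 2 * (lX m k * lY m k) ≤ m * (lX m k + lY m k) := by
    rw [two_mul, Nat.mul_add]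
    exact Nat.add_le_add
      (by rw [mul_comm m (lX m k)]; exact Nat.mul_le_mul_left _ h2)
      (Nat.mul_le_mul_right _ h1)
  zify [h1, h2, h5]
  ring
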